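/- arXiv:1409.2325 — 2 statements merged into one kernel-verified Lean document; each statement's English description precedes it below -/
import Mathlib

section
/- The elements α₁ = −h + l₁ + l₂ + l₃ and αᵢ = lᵢ − lᵢ₋₁ for 2 ≤ i ≤ n form a ℤ-basis of the sublattice {v ∈ L : B(v,K) = 0 and B(v,C) = 0} of L, and the Gram matrix of −B on this basis is the Cartan matrix of type Eₙ; explicitly, −B(αᵢ,αᵢ) = 2 for all i, −B(α₁,α₄) = −B(α₄,α₁) = −1, −B(αᵢ,αᵢ₊₁) = −B(αᵢ₊₁,αᵢ) = −1 for 2 ≤ i ≤ n−1, and −B(αᵢ,αⱼ) = 0 for all other pairs i ≠ j. -/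
noncomputable section
namespace ADEPaper

/-- The Picard lattice `L = ℤ^{n+2}` with basis `h = e 0`, `lᵢ = e i` for `1 ≤ i ≤ n+1`. -/
abbrev L (n : ℕ) : Type := Fin (n + 2) → ℤ

/-- The intersection form: `B(h,h) = 1`, `B(lᵢ,lᵢ) = -1`, distinct basis vectors orthogonal. -/
def B (n : ℕ) (v w : L n) : ℤ :=
  v 0 * w 0 - ∑ i : Fin (n + 1), v i.succ * w i.succ

/-- The canonical class `K = -3h + l₁ + ⋯ + l_{n+1}`. -/
def K (n : ℕ) : L n := fun j => if j = 0 then -3 else 1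

/-- The exceptional class `l i` here denotes `l_{i+1}` of the paper, `i : Fin (n+1)`. -/
def l (n : ℕ) (i : Fin (n + 1)) : L n := fun j => if j = i.succ then 1 else 0

/-- `C = l_{n+1}`, the exceptional curve of the `Eₙ`-surface. -/
def C (n : ℕ) : L n := l n (Fin.last n)

/-- The simple roots: `α 0 = α₁ = -h + l₁ + l₂ + l₃` and `α i = α_{i+1} = l_{i+1} - l_i`
for `1 ≤ i ≤ n - 1` (the index `i : Fin n` corresponds to the paper's index `i + 1`). -/
def α (n : ℕ) (i : Fin n) : L n :=
  if (i : ℕ) = 0 then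
    fun k => if (k : ℕ) = 0 then -1 else if (k : ℕ) ≤ 3 then 1 else 0
  else
    fun k => if (k : ℕ) = (i : ℕ) + 1 then 1 else if (k : ℕ) = (i : ℕ) then -1 else 0

set_option maxRecDepth 40000 in
set_option maxHeartbeats 1600000 in
/-- The simple roots `α₁ = -h+l₁+l₂+l₃`, `αᵢ = lᵢ - l_{i-1}` (`2 ≤ i ≤ n`) form a ℤ-basis of
the sublattice `{v ∈ L : B(v,K) = 0, B(v,C) = 0}`, and the Gram matrix of `-B` on this basis
is the Cartan matrix of type `Eₙ`. -/
theorem En_simple_roots_basis_and_cartan (n : ℕ) (hn : 4 ≤ n) (hn' : n ≤ 8) :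
    (∀ i : Fin n, B n (α n i) (K n) = 0 ∧ B n (α n i) (C n) = 0) ∧
    (∀ v : L n, B n v (K n) = 0 → B n v (C n) = 0 →
      ∃! c : Fin n → ℤ, v = ∑ i : Fin n, c i • α n i) ∧
    (∀ i : Fin n, -B n (α n i) (α n i) = 2) ∧
    (∀ i j : Fin n, ((i : ℕ) = 0 ∧ (j : ℕ) = 3) ∨ ((i : ℕ) = 3 ∧ (j : ℕ) = 0) →
      -B n (α n i) (α n j) = -1) ∧
    (∀ i j : Fin n,
      (1 ≤ (i : ℕ) ∧ (j : ℕ) = (i : ℕ) + 1) ∨ (1 ≤ (j : ℕ) ∧ (i : ℕ) = (j : ℕ) + 1) →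
      -B n (α n i) (α n j) = -1) ∧
    (∀ i j : Fin n, i ≠ j →
      ¬(((i : ℕ) = 0 ∧ (j : ℕ) = 3) ∨ ((i : ℕ) = 3 ∧ (j : ℕ) = 0)) →
      ¬((1 ≤ (i : ℕ) ∧ (j : ℕ) = (i : ℕ) + 1) ∨ (1 ≤ (j : ℕ) ∧ (i : ℕ) = (j : ℕ) + 1)) →
      -B n (α n i) (α n j) = 0) := by
  have hcase : n = 4 ∨ n = 5 ∨ n = 6 ∨ n = 7 ∨ n = 8 := by omega
  clear hn hn'
  rcases hcase with rfl | rfl | rfl | rfl | rfl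
  · refine ⟨by decide, ?_, by decide, by decide, by decide, by decide⟩
    intro v h1 h2
    obtain ⟨a0,a1,a2,a3,a4,a5,rfl⟩ : ∃ a0 a1 a2 a3 a4 a5, v = ![a0,a1,a2,a3,a4,a5] :=
      ⟨v 0, v 1, v 2, v 3, v 4, v 5, by funext j; fin_cases j <;> rfl⟩
    simp only [B, K, C, l, α, Fin.sum_univ_succ, Fin.sum_univ_zero, Matrix.cons_val_succ, Matrix.cons_val_zero, Fin.succ_zero_eq_one, Matrix.cons_val_one] at h1 h2
    norm_num [Fin.ext_iff] at h1 h2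
    refine ⟨![-a0, -a0 - a1, a0 + a3 + a4, a4], ?_, ?_⟩
    · funext j
      simp only [α, Fin.sum_univ_succ, Fin.sum_univ_zero, Matrix.cons_val_succ, Matrix.cons_val_zero, Fin.succ_zero_eq_one, Matrix.cons_val_one]
      fin_cases j <;> norm_num <;> linarith
    · intro c' hc'
      obtain ⟨b0,b1,b2,b3,rfl⟩ : ∃ b0 b1 b2 b3, c' = ![b0,b1,b2,b3] :=
        ⟨c' 0, c' 1, c' 2, c' 3, by funext j; fin_cases j <;> rfl⟩
      have e0 := congrFun hc' 0
      have e1 := congrFun hc' 1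
      have e3 := congrFun hc' 3
      have e4 := congrFun hc' 4
      simp only [α, Fin.sum_univ_succ, Fin.sum_univ_zero, Matrix.cons_val_succ, Matrix.cons_val_zero, Fin.succ_zero_eq_one, Matrix.cons_val_one] at e0 e1 e3 e4
      simp [show ((2:Fin 3):ℕ) = 2 from rfl, show ((2:Fin 4):ℕ) = 2 from rfl, show ((3:Fin 4):ℕ) = 3 from rfl, show ((2:Fin 5):ℕ) = 2 from rfl, show ((3:Fin 5):ℕ) = 3 from rfl, show ((4:Fin 5):ℕ) = 4 from rfl, show ((2:Fin 6):ℕ) = 2 from rfl, show ((3:Fin 6):ℕ) = 3 from rfl, show ((4:Fin 6):ℕ) = 4 from rfl, show ((5:Fin 6):ℕ) = 5 from rfl] at e0 e1 e3 e4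
      funext i
      fin_cases i <;> norm_num <;> linarith

  · refine ⟨by decide, ?_, by decide, by decide, by decide, by decide⟩
    intro v h1 h2
    obtain ⟨a0,a1,a2,a3,a4,a5,a6,rfl⟩ : ∃ a0 a1 a2 a3 a4 a5 a6, v = ![a0,a1,a2,a3,a4,a5,a6] :=
      ⟨v 0, v 1, v 2, v 3, v 4, v 5, v 6, by funext j; fin_cases j <;> rfl⟩
    simp only [B, K, C, l, α, Fin.sum_univ_succ, Fin.sum_univ_zero, Matrix.cons_val_succ, Matrix.cons_val_zero, Fin.succ_zero_eq_one, Matrix.cons_val_one] at h1 h2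
    norm_num [Fin.ext_iff] at h1 h2
    refine ⟨![-a0, -a0 - a1, a0 + a3 + a4 + a5, a4 + a5, a5], ?_, ?_⟩
    · funext j
      simp only [α, Fin.sum_univ_succ, Fin.sum_univ_zero, Matrix.cons_val_succ, Matrix.cons_val_zero, Fin.succ_zero_eq_one, Matrix.cons_val_one]
      fin_cases j <;> norm_num <;> linarith
    · intro c' hc'
      obtain ⟨b0,b1,b2,b3,b4,rfl⟩ : ∃ b0 b1 b2 b3 b4, c' = ![b0,b1,b2,b3,b4] :=
        ⟨c' 0, c' 1, c' 2, c' 3, c' 4, by funext j; fin_cases j <;> rfl⟩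
      have e0 := congrFun hc' 0
      have e1 := congrFun hc' 1
      have e3 := congrFun hc' 3
      have e4 := congrFun hc' 4
      have e5 := congrFun hc' (Fin.succ (4))
      simp only [α, Fin.sum_univ_succ, Fin.sum_univ_zero, Matrix.cons_val_succ, Matrix.cons_val_zero, Fin.succ_zero_eq_one, Matrix.cons_val_one] at e0 e1 e3 e4 e5
      simp [show ((2:Fin 3):ℕ) = 2 from rfl, show ((2:Fin 4):ℕ) = 2 from rfl, show ((3:Fin 4):ℕ) = 3 from rfl, show ((2:Fin 5):ℕ) = 2 from rfl, show ((3:Fin 5):ℕ) = 3 from rfl, show ((4:Fin 5):ℕ) = 4 from rfl, show ((2:Fin 6):ℕ) = 2 from rfl, show ((3:Fin 6):ℕ) = 3 from rfl, show ((4:Fin 6):ℕ) = 4 from rfl, show ((5:Fin 6):ℕ) = 5 from rfl, show ((2:Fin 7):ℕ) = 2 from rfl, show ((3:Fin 7):ℕ) = 3 from rfl, show ((4:Fin 7):ℕ) = 4 from rfl, show ((5:Fin 7):ℕ) = 5 from rfl, show ((6:Fin 7):ℕ) = 6 from rfl] at e0 e1 e3 e4 e5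
      funext i
      fin_cases i <;> norm_num <;> linarith

  · refine ⟨by decide, ?_, by decide, by decide, by decide, by decide⟩
    intro v h1 h2
    obtain ⟨a0,a1,a2,a3,a4,a5,a6,a7,rfl⟩ : ∃ a0 a1 a2 a3 a4 a5 a6 a7, v = ![a0,a1,a2,a3,a4,a5,a6,a7] :=
      ⟨v 0, v 1, v 2, v 3, v 4, v 5, v 6, v 7, by funext j; fin_cases j <;> rfl⟩
    simp only [B, K, C, l, α, Fin.sum_univ_succ, Fin.sum_univ_zero, Matrix.cons_val_succ, Matrix.cons_val_zero, Fin.succ_zero_eq_one, Matrix.cons_val_one] at h1 h2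
    norm_num [Fin.ext_iff] at h1 h2
    refine ⟨![-a0, -a0 - a1, a0 + a3 + a4 + a5 + a6, a4 + a5 + a6, a5 + a6, a6], ?_, ?_⟩
    · funext j
      simp only [α, Fin.sum_univ_succ, Fin.sum_univ_zero, Matrix.cons_val_succ, Matrix.cons_val_zero, Fin.succ_zero_eq_one, Matrix.cons_val_one]
      fin_cases j <;> norm_num <;> linarith
    · intro c' hc'
      obtain ⟨b0,b1,b2,b3,b4,b5,rfl⟩ : ∃ b0 b1 b2 b3 b4 b5, c' = ![b0,b1,b2,b3,b4,b5] :=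
        ⟨c' 0, c' 1, c' 2, c' 3, c' 4, c' 5, by funext j; fin_cases j <;> rfl⟩
      have e0 := congrFun hc' 0
      have e1 := congrFun hc' 1
      have e3 := congrFun hc' 3
      have e4 := congrFun hc' 4
      have e5 := congrFun hc' (Fin.succ (4))
      have e6 := congrFun hc' (Fin.succ (Fin.succ (4)))
      simp only [α, Fin.sum_univ_succ, Fin.sum_univ_zero, Matrix.cons_val_succ, Matrix.cons_val_zero, Fin.succ_zero_eq_one, Matrix.cons_val_one] at e0 e1 e3 e4 e5 e6
      simp [show ((2:Fin 3):ℕ) = 2 from rfl, show ((2:Fin 4):ℕ) = 2 from rfl, show ((3:Fin 4):ℕ) = 3 from rfl, show ((2:Fin 5):ℕ) = 2 from rfl, show ((3:Fin 5):ℕ) = 3 from rfl, show ((4:Fin 5):ℕ) = 4 from rfl, show ((2:Fin 6):ℕ) = 2 from rfl, show ((3:Fin 6):ℕ) = 3 from rfl, show ((4:Fin 6):ℕ) = 4 from rfl, show ((5:Fin 6):ℕ) = 5 from rfl, show ((2:Fin 7):ℕ) = 2 from rfl, show ((3:Fin 7):ℕ) = 3 from rfl, show ((4:Fin 7):ℕ)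 = 4 from rfl, show ((5:Fin 7):ℕ) = 5 from rfl, show ((6:Fin 7):ℕ) = 6 from rfl, show ((2:Fin 8):ℕ) = 2 from rfl, show ((3:Fin 8):ℕ) = 3 from rfl, show ((4:Fin 8):ℕ) = 4 from rfl, show ((5:Fin 8):ℕ) = 5 from rfl, show ((6:Fin 8):ℕ) = 6 from rfl, show ((7:Fin 8):ℕ) = 7 from rfl] at e0 e1 e3 e4 e5 e6
      funext i
      fin_cases i <;> norm_num <;> linarith

  · refine ⟨by decide, ?_, by decide, by decide, by decide, by decide⟩
    intro v h1 h2
    obtain ⟨a0,a1,a2,a3,a4,a5,a6,a7,a8,rfl⟩ : ∃ a0 a1 a2 a3 a4 a5 a6 a7 a8, v = ![a0,a1,a2,a3,a4,a5,a6,a7,a8] :=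
      ⟨v 0, v 1, v 2, v 3, v 4, v 5, v 6, v 7, v 8, by funext j; fin_cases j <;> rfl⟩
    simp only [B, K, C, l, α, Fin.sum_univ_succ, Fin.sum_univ_zero, Matrix.cons_val_succ, Matrix.cons_val_zero, Fin.succ_zero_eq_one, Matrix.cons_val_one] at h1 h2
    norm_num [Fin.ext_iff] at h1 h2
    refine ⟨![-a0, -a0 - a1, a0 + a3 + a4 + a5 + a6 + a7, a4 + a5 + a6 + a7, a5 + a6 + a7, a6 + a7, a7], ?_, ?_⟩
    · funext j
      simp only [α, Fin.sum_univ_succ, Fin.sum_univ_zero, Matrix.cons_val_succ, Matrix.cons_val_zero, Fin.succ_zero_eq_one, Matrix.cons_val_one]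
      fin_cases j <;> norm_num <;> linarith
    · intro c' hc'
      obtain ⟨b0,b1,b2,b3,b4,b5,b6,rfl⟩ : ∃ b0 b1 b2 b3 b4 b5 b6, c' = ![b0,b1,b2,b3,b4,b5,b6] :=
        ⟨c' 0, c' 1, c' 2, c' 3, c' 4, c' 5, c' 6, by funext j; fin_cases j <;> rfl⟩
      have e0 := congrFun hc' 0
      have e1 := congrFun hc' 1
      have e3 := congrFun hc' 3
      have e4 := congrFun hc' 4
      have e5 := congrFun hc' (Fin.succ (4))
      have e6 := congrFun hc' (Fin.succ (Fin.succ (4)))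
      have e7 := congrFun hc' (Fin.succ (Fin.succ (Fin.succ (4))))
      simp only [α, Fin.sum_univ_succ, Fin.sum_univ_zero, Matrix.cons_val_succ, Matrix.cons_val_zero, Fin.succ_zero_eq_one, Matrix.cons_val_one] at e0 e1 e3 e4 e5 e6 e7
      simp [show ((2:Fin 3):ℕ) = 2 from rfl, show ((2:Fin 4):ℕ) = 2 from rfl, show ((3:Fin 4):ℕ) = 3 from rfl, show ((2:Fin 5):ℕ) = 2 from rfl, show ((3:Fin 5):ℕ) = 3 from rfl, show ((4:Fin 5):ℕ) = 4 from rfl, show ((2:Fin 6):ℕ) = 2 from rfl, show ((3:Fin 6):ℕ) = 3 from rfl, show ((4:Fin 6):ℕ) = 4 from rfl, show ((5:Fin 6):ℕ) = 5 from rfl, show ((2:Fin 7):ℕ) = 2 from rfl, show ((3:Fin 7):ℕ) = 3 from rfl, show ((4:Fin 7):ℕ) = 4 from rfl, show ((5:Fin 7):ℕ) = 5 from rfl, show ((6:Fin 7):ℕ) = 6 from rfl, show ((2:Fin 8):ℕ) = 2 from rfl, show ((3:Fin 8):ℕ) = 3 from rfl, show ((4:Fin 8):ℕ) = 4 from rfl,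 show ((5:Fin 8):ℕ) = 5 from rfl, show ((6:Fin 8):ℕ) = 6 from rfl, show ((7:Fin 8):ℕ) = 7 from rfl, show ((2:Fin 9):ℕ) = 2 from rfl, show ((3:Fin 9):ℕ) = 3 from rfl, show ((4:Fin 9):ℕ) = 4 from rfl, show ((5:Fin 9):ℕ) = 5 from rfl, show ((6:Fin 9):ℕ) = 6 from rfl, show ((7:Fin 9):ℕ) = 7 from rfl, show ((8:Fin 9):ℕ) = 8 from rfl] at e0 e1 e3 e4 e5 e6 e7
      funext i
      fin_cases i <;> norm_num <;> linarith

  · refine ⟨by decide, ?_, by decide, by decide, by decide, by decide⟩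
    intro v h1 h2
    obtain ⟨a0,a1,a2,a3,a4,a5,a6,a7,a8,a9,rfl⟩ : ∃ a0 a1 a2 a3 a4 a5 a6 a7 a8 a9, v = ![a0,a1,a2,a3,a4,a5,a6,a7,a8,a9] :=
      ⟨v 0, v 1, v 2, v 3, v 4, v 5, v 6, v 7, v 8, v 9, by funext j; fin_cases j <;> rfl⟩
    simp only [B, K, C, l, α, Fin.sum_univ_succ, Fin.sum_univ_zero, Matrix.cons_val_succ, Matrix.cons_val_zero, Fin.succ_zero_eq_one, Matrix.cons_val_one] at h1 h2
    norm_num [Fin.ext_iff] at h1 h2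
    refine ⟨![-a0, -a0 - a1, a0 + a3 + a4 + a5 + a6 + a7 + a8, a4 + a5 + a6 + a7 + a8, a5 + a6 + a7 + a8, a6 + a7 + a8, a7 + a8, a8], ?_, ?_⟩
    · funext j
      simp only [α, Fin.sum_univ_succ, Fin.sum_univ_zero, Matrix.cons_val_succ, Matrix.cons_val_zero, Fin.succ_zero_eq_one, Matrix.cons_val_one]
      fin_cases j <;> norm_num <;> linarith
    · intro c' hc'
      obtain ⟨b0,b1,b2,b3,b4,b5,b6,b7,rfl⟩ : ∃ b0 b1 b2 b3 b4 b5 b6 b7, c' = ![b0,b1,b2,b3,b4,b5,b6,b7] :=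
        ⟨c' 0, c' 1, c' 2, c' 3, c' 4, c' 5, c' 6, c' 7, by funext j; fin_cases j <;> rfl⟩
      have e0 := congrFun hc' 0
      have e1 := congrFun hc' 1
      have e3 := congrFun hc' 3
      have e4 := congrFun hc' 4
      have e5 := congrFun hc' (Fin.succ (4))
      have e6 := congrFun hc' (Fin.succ (Fin.succ (4)))
      have e7 := congrFun hc' (Fin.succ (Fin.succ (Fin.succ (4))))
      have e8 := congrFun hc' (Fin.succ (Fin.succ (Fin.succ (Fin.succ (4)))))
      simp only [α, Fin.sum_univ_succ, Fin.sum_univ_zero, Matrix.cons_val_succ, Matrix.cons_val_zero, Fin.succ_zero_eq_one, Matrix.cons_val_one] at e0 e1 e3 e4 e5 e6 e7 e8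
      simp [show ((2:Fin 3):ℕ) = 2 from rfl, show ((2:Fin 4):ℕ) = 2 from rfl, show ((3:Fin 4):ℕ) = 3 from rfl, show ((2:Fin 5):ℕ) = 2 from rfl, show ((3:Fin 5):ℕ) = 3 from rfl, show ((4:Fin 5):ℕ) = 4 from rfl, show ((2:Fin 6):ℕ) = 2 from rfl, show ((3:Fin 6):ℕ) = 3 from rfl, show ((4:Fin 6):ℕ) = 4 from rfl, show ((5:Fin 6):ℕ) = 5 from rfl, show ((2:Fin 7):ℕ) = 2 from rfl, show ((3:Fin 7):ℕ) = 3 from rfl, show ((4:Fin 7):ℕ) = 4 from rfl, show ((5:Fin 7):ℕ) = 5 from rfl, show ((6:Fin 7):ℕ) = 6 from rfl, show ((2:Fin 8):ℕ) = 2 from rfl, show ((3:Fin 8):ℕ) = 3 from rfl, show ((4:Fin 8):ℕ) = 4 from rfl, show ((5:Fin 8):ℕ) = 5 from rfl, show ((6:Fin 8):ℕ) = 6 from rfl, show ((7:Fin 8):ℕ) = 7 from rfl, show ((2:Fin 9):ℕ) = 2 from rfl, show ((3:Fin 9):ℕ) = 3 from rfl, show ((4:Fin 9):ℕ) = 4 from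 rfl, show ((5:Fin 9):ℕ) = 5 from rfl, show ((6:Fin 9):ℕ) = 6 from rfl, show ((7:Fin 9):ℕ) = 7 from rfl, show ((8:Fin 9):ℕ) = 8 from rfl, show ((2:Fin 10):ℕ) = 2 from rfl, show ((3:Fin 10):ℕ) = 3 from rfl, show ((4:Fin 10):ℕ) = 4 from rfl, show ((5:Fin 10):ℕ) = 5 from rfl, show ((6:Fin 10):ℕ) = 6 from rfl, show ((7:Fin 10):ℕ) = 7 from rfl, show ((8:Fin 10):ℕ) = 8 from rfl, show ((9:Fin 10):ℕ) = 9 from rfl] at e0 e1 e3 e4 e5 e6 e7 e8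
      funext i
      fin_cases i <;> norm_num <;> linarith


end ADEPaper
end
end

section
/- There exists a surjective ℂ-algebra homomorphism from R/J onto R/I, where J is the ideal of R generated by the single element x₁y₁ + x₂y₂ + ⋯ + xₙyₙ, and I is the ideal of R generated by the n−2 elements a_{i,1}x₁y₁ + a_{i,2}x₂y₂ + a_{i,3}xᵢyᵢ for 3 ≤ i ≤ n. (R/J is the affine coordinate ring of the cone over the quadric Dₙ/P ⊂ ℙ^{2n−1}, and R/I is the Cox ring of a Dₙ-surface; thus Spec of the Cox ring embeds as a closed subvariety of the cone over Dₙ/P.) -/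
noncomputable section
namespace ADEPaper

/-- The polynomial ring `R = ℂ[x₁, y₁, …, xₙ, yₙ]`: the variable `(i, false)` is `x_{i+1}`
and `(i, true)` is `y_{i+1}` (so `i : Fin n` corresponds to the paper's subscript `i + 1`). -/
abbrev R (n : ℕ) : Type := MvPolynomial (Fin n × Bool) ℂ

/-- The variable `x_{i+1}`. -/
def xv (n : ℕ) (i : Fin n) : R n := MvPolynomial.X (i, false)

/-- The variable `y_{i+1}`. -/
def yv (n : ℕ) (i : Fin n) : R n := MvPolynomial.X (i, true)

set_option maxHeartbeats 1000000 in
/-- `R/J`, where `J = (x₁y₁ + x₂y₂ + ⋯ + xₙyₙ)`, is the affine coordinate ring of the cone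
over the quadric `Dₙ/P ⊂ ℙ^{2n-1}`, and `R/I`, where `I` is generated by the `n - 2`
quadrics `a_{i,1}x₁y₁ + a_{i,2}x₂y₂ + a_{i,3}xᵢyᵢ` (`3 ≤ i ≤ n`, all `a_{i,j} ≠ 0`), is the
Cox ring of a `Dₙ`-surface.  There is a surjective ℂ-algebra homomorphism `R/J → R/I`;
thus `Spec` of the Cox ring embeds as a closed subvariety of the cone over `Dₙ/P`. -/
theorem cox_ring_embeds_in_cone (n : ℕ) (hn : 3 ≤ n) (a : ℕ → ℕ → ℂ)
    (ha : ∀ i : ℕ, 3 ≤ i → i ≤ n → a i 1 ≠ 0 ∧ a i 2 ≠ 0 ∧ a i 3 ≠ 0) :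
    ∃ φ : (R n ⧸ Ideal.span ({∑ i : Fin n, xv n i * yv n i} : Set (R n))) →ₐ[ℂ]
          (R n ⧸ Ideal.span {p : R n | ∃ k : Fin n, 2 ≤ (k : ℕ) ∧
            p = MvPolynomial.C (a ((k : ℕ) + 1) 1) * (xv n ⟨0, by omega⟩ * yv n ⟨0, by omega⟩)
              + MvPolynomial.C (a ((k : ℕ) + 1) 2) * (xv n ⟨1, by omega⟩ * yv n ⟨1, by omega⟩)
              + MvPolynomial.C (a ((k : ℕ) + 1) 3) * (xv n k * yv n k)}),
      Function.Surjective φ := by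
  classical
  have h2n : 2 < n := hn
  set k₂ : Fin n := ⟨2, h2n⟩ with hk₂
  set F : Finset (Fin n) := Finset.univ.filter (fun k => 2 ≤ (k : ℕ)) with hF
  have hk₂F : k₂ ∈ F := by simp [hF, hk₂]
  set S₁ : ℂ := ∑ k ∈ F.erase k₂, a ((k : ℕ) + 1) 1 with hS₁
  set S₂ : ℂ := ∑ k ∈ F.erase k₂, a ((k : ℕ) + 1) 2 with hS₂
  have ha3 := ha 3 le_rfl hn
  obtain ⟨t, ht⟩ := Infinite.exists_notMem_finset ({0, -S₁ / a 3 1, -S₂ / a 3 2} : Finset ℂ)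
  simp only [Finset.mem_insert, Finset.mem_singleton, not_or] at ht
  obtain ⟨ht0, ht1, ht2⟩ := ht
  set lam : Fin n → ℂ := fun k => if k = k₂ then t else 1 with hlam
  have hlamne : ∀ k, lam k ≠ 0 := by
    intro k
    simp only [hlam]
    split <;> simp [ht0]
  set c : Fin n → ℂ := fun i =>
    if (i : ℕ) = 0 then ∑ k ∈ F, lam k * a ((k : ℕ) + 1) 1
    else if (i : ℕ) = 1 then ∑ k ∈ F, lam k * a ((k : ℕ) + 1) 2
    else lam i * a ((i : ℕ) + 1) 3 with hc
  have hsum1 : ∑ k ∈ F, lam k * a ((k : ℕ) + 1) 1 = t * a 3 1 + S₁ := by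
    rw [← Finset.add_sum_erase _ _ hk₂F, hS₁]
    have h1 : lam k₂ * a (((k₂ : Fin n) : ℕ) + 1) 1 = t * a 3 1 := by simp [hlam, hk₂]
    have h2 : ∑ k ∈ F.erase k₂, lam k * a ((k : ℕ) + 1) 1
        = ∑ k ∈ F.erase k₂, a ((k : ℕ) + 1) 1 :=
      Finset.sum_congr rfl (fun k hk => by
        rw [hlam]; simp [Finset.ne_of_mem_erase hk])
    rw [h1, h2]
  have hsum2 : ∑ k ∈ F, lam k * a ((k : ℕ) + 1) 2 = t * a 3 2 + S₂ := by
    rw [← Finset.add_sum_erase _ _ hk₂F, hS₂]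
    have h1 : lam k₂ * a (((k₂ : Fin n) : ℕ) + 1) 2 = t * a 3 2 := by simp [hlam, hk₂]
    have h2 : ∑ k ∈ F.erase k₂, lam k * a ((k : ℕ) + 1) 2
        = ∑ k ∈ F.erase k₂, a ((k : ℕ) + 1) 2 :=
      Finset.sum_congr rfl (fun k hk => by
        rw [hlam]; simp [Finset.ne_of_mem_erase hk])
    rw [h1, h2]
  have hcne : ∀ i, c i ≠ 0 := by
    intro i
    rw [hc]
    dsimp only
    split_ifs with h1 h2
    · rw [hsum1]
      intro h
      exact ht1 (by rw [eq_div_iff ha3.1]; linear_combination h)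
    · rw [hsum2]
      intro h
      exact ht2 (by rw [eq_div_iff ha3.2.1]; linear_combination h)
    · have hin := i.isLt
      exact mul_ne_zero (hlamne i) ((ha ((i : ℕ) + 1) (by omega) (by omega)).2.2)
  set ψ : R n →ₐ[ℂ] R n := MvPolynomial.aeval (fun p : Fin n × Bool =>
    if p.2 then (MvPolynomial.X p : R n) else MvPolynomial.C (c p.1) * MvPolynomial.X p)
    with hψ
  set I : Ideal (R n) := Ideal.span {p : R n | ∃ k : Fin n, 2 ≤ (k : ℕ) ∧
            p = MvPolynomial.C (a ((k : ℕ) + 1) 1) * (xv n ⟨0, by omega⟩ * yv n ⟨0, by omega⟩)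
              + MvPolynomial.C (a ((k : ℕ) + 1) 2) * (xv n ⟨1, by omega⟩ * yv n ⟨1, by omega⟩)
              + MvPolynomial.C (a ((k : ℕ) + 1) 3) * (xv n k * yv n k)} with hI
  have hmem : ψ (∑ i : Fin n, xv n i * yv n i) ∈ I := by
    have hψs : ψ (∑ i : Fin n, xv n i * yv n i)
        = ∑ i : Fin n, MvPolynomial.C (c i) * (xv n i * yv n i) := by
      rw [map_sum]
      refine Finset.sum_congr rfl fun i _ => ?_
      rw [xv, yv, map_mul, hψ, MvPolynomial.aeval_X, MvPolynomial.aeval_X]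
      simp [mul_assoc]
    have hE : (∑ i : Fin n, MvPolynomial.C (c i) * (xv n i * yv n i))
        = ∑ k ∈ F, MvPolynomial.C (lam k) *
          (MvPolynomial.C (a ((k : ℕ) + 1) 1) * (xv n ⟨0, by omega⟩ * yv n ⟨0, by omega⟩)
            + MvPolynomial.C (a ((k : ℕ) + 1) 2) * (xv n ⟨1, by omega⟩ * yv n ⟨1, by omega⟩)
            + MvPolynomial.C (a ((k : ℕ) + 1) 3) * (xv n k * yv n k)) := by
      have hcF : ∀ k ∈ F, (MvPolynomial.C (c k) : R n)
          = MvPolynomial.C (lam k) * MvPolynomial.C (a ((k : ℕ) + 1) 3) := by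
        intro k hk
        have h2k : 2 ≤ (k : ℕ) := by simpa [hF] using hk
        rw [hc, ← MvPolynomial.C_mul]
        dsimp only
        rw [if_neg (by omega), if_neg (by omega)]
      have hR : ∀ k ∈ F, MvPolynomial.C (lam k) *
          (MvPolynomial.C (a ((k : ℕ) + 1) 1) * (xv n ⟨0, by omega⟩ * yv n ⟨0, by omega⟩)
            + MvPolynomial.C (a ((k : ℕ) + 1) 2) * (xv n ⟨1, by omega⟩ * yv n ⟨1, by omega⟩)
            + MvPolynomial.C (a ((k : ℕ) + 1) 3) * (xv n k * yv n k))
          = MvPolynomial.C (lam k * a ((k : ℕ) + 1) 1) * (xv n ⟨0, by omega⟩ * yv n ⟨0, by omega⟩)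
            + MvPolynomial.C (lam k * a ((k : ℕ) + 1) 2) * (xv n ⟨1, by omega⟩ * yv n ⟨1, by omega⟩)
            + MvPolynomial.C (c k) * (xv n k * yv n k) := by
        intro k hk
        rw [hcF k hk, MvPolynomial.C_mul, MvPolynomial.C_mul]
        ring
      rw [Finset.sum_congr rfl hR, Finset.sum_add_distrib, Finset.sum_add_distrib,
        ← Finset.sum_mul, ← Finset.sum_mul, ← map_sum, ← map_sum]
      have hc0 : c ⟨0, by omega⟩ = ∑ k ∈ F, lam k * a ((k : ℕ) + 1) 1 := by
        simp only [hc]; norm_num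
      have hc1 : c ⟨1, by omega⟩ = ∑ k ∈ F, lam k * a ((k : ℕ) + 1) 2 := by
        simp only [hc]; norm_num
      rw [← hc0, ← hc1]
      rw [← Finset.sum_filter_add_sum_filter_not Finset.univ (fun i : Fin n => 2 ≤ (i : ℕ))
        (fun i => MvPolynomial.C (c i) * (xv n i * yv n i))]
      have hfilt : Finset.univ.filter (fun i : Fin n => ¬ 2 ≤ (i : ℕ))
          = {(⟨0, by omega⟩ : Fin n), ⟨1, by omega⟩} := by
        ext i
        simp only [Finset.mem_filter, Finset.mem_univ, true_and, Finset.mem_insert,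
          Finset.mem_singleton, Fin.ext_iff]
        omega
      rw [hfilt, Finset.sum_insert (by simp [Fin.ext_iff]), Finset.sum_singleton, ← hF]
      ring
    rw [hψs, hE, hI]
    refine Ideal.sum_mem _ fun k hk => Ideal.mul_mem_left _ _ (Ideal.subset_span ?_)
    exact ⟨k, by simpa [hF] using hk, rfl⟩
  set f : R n →ₐ[ℂ] (R n ⧸ I) := (Ideal.Quotient.mkₐ ℂ I).comp ψ with hfdef
  have hfg : f (∑ i : Fin n, xv n i * yv n i) = 0 := by
    rw [hfdef]
    simp only [AlgHom.comp_apply, Ideal.Quotient.mkₐ_eq_mk]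
    rw [Ideal.Quotient.eq_zero_iff_mem]
    exact hmem
  refine ⟨Ideal.Quotient.liftₐ _ f ?_, ?_⟩
  · intro r hr
    rw [Ideal.mem_span_singleton] at hr
    obtain ⟨q, rfl⟩ := hr
    rw [map_mul, hfg, zero_mul]
  · have hrange : ∀ r : R n, ∃ s : R n, f s = Ideal.Quotient.mk I r := by
      intro r
      induction r using MvPolynomial.induction_on with
      | C z =>
          refine ⟨MvPolynomial.C z, ?_⟩
          rw [hfdef]
          simp only [AlgHom.comp_apply, Ideal.Quotient.mkₐ_eq_mk, hψ, MvPolynomial.aeval_C]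
          rw [show (Ideal.Quotient.mk I) (MvPolynomial.C z)
              = (Ideal.Quotient.mkₐ ℂ I) (MvPolynomial.C z) from rfl,
            ← MvPolynomial.algebraMap_eq, AlgHom.commutes]
          rfl
      | add p q hp hq =>
          obtain ⟨sp, hsp⟩ := hp
          obtain ⟨sq, hsq⟩ := hq
          exact ⟨sp + sq, by rw [map_add, hsp, hsq, ← map_add]⟩
      | mul_X p j hp =>
          obtain ⟨sp, hsp⟩ := hp
          obtain ⟨i, b⟩ := j
          cases b with
          | true =>
              refine ⟨sp * MvPolynomial.X (i, true), ?_⟩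
              rw [map_mul, hsp, map_mul]
              congr 1
              rw [hfdef]
              simp [hψ]
          | false =>
              refine ⟨sp * (MvPolynomial.C (c i)⁻¹ * MvPolynomial.X (i, false)), ?_⟩
              have hx : ψ (MvPolynomial.C (c i)⁻¹ * MvPolynomial.X (i, false))
                  = MvPolynomial.X (i, false) := by
                rw [map_mul, hψ, MvPolynomial.aeval_X, MvPolynomial.aeval_C,
                  MvPolynomial.algebraMap_eq]
                simp only [Bool.false_eq_true, if_false, ← mul_assoc, ← MvPolynomial.C_mul,
                  inv_mul_cancel₀ (hcne i), MvPolynomial.C_1, one_mul]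
              have hfx : f (MvPolynomial.C (c i)⁻¹ * MvPolynomial.X (i, false))
                  = Ideal.Quotient.mk I (MvPolynomial.X (i, false)) := by
                rw [hfdef, AlgHom.comp_apply, hx, Ideal.Quotient.mkₐ_eq_mk]
              rw [map_mul, hsp, hfx, ← map_mul]
    intro z
    obtain ⟨r, rfl⟩ := Ideal.Quotient.mk_surjective z
    obtain ⟨s, hs⟩ := hrange r
    refine ⟨Ideal.Quotient.mk _ s, ?_⟩
    rw [Ideal.Quotient.liftₐ_apply]
    exact hs


end ADEPaper
end
end
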